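/- (Frostman's lemma for neutralized weighted pressure) Let Z ⊆ X be nonempty compact, s ∈ ℝ, N ∈ ℕ, ε > 0, and suppose c := W^s_{N,ε}(Z,Φ) > 0. Then there exists a Borel probability measure μ on X with μ(Z) = 1 such that for every x ∈ X and n ≥ N, μ(B_n(x, e^{−nε})) ≤ (1/c) · exp[−ns + sup_{y∈B_n(x,e^{−nε})} φ_n(y)]. -/

import Mathlib

open Filter Set MeasureTheory Metric Topology ENNReal

variable {X : Type*} [MetricSpace X]

/-- The Bowen ball of order `n` and radius `r` around `x`. -/
def bowenBall (T : X → X) (n : ℕ) (x : X) (r : ℝ) : Set X :=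
  {y | ∀ j < n, dist (T^[j] x) (T^[j] y) < r}

/-- The neutralized Bowen ball `B_n(x, e^{-nε})`. -/
noncomputable def nBall (T : X → X) (n : ℕ) (ε : ℝ) (x : X) : Set X :=
  bowenBall T n x (Real.exp (-(n * ε)))

/-- The weight `exp[-n s + sup_{B_n(x,e^{-nε})} φ_n]` of a neutralized Bowen ball. -/
noncomputable def wSup (T : X → X) (φ : ℕ → X → ℝ) (s ε : ℝ) (n : ℕ) (x : X) : ℝ≥0∞ :=
  ENNReal.ofReal (Real.exp (-(n : ℝ) * s + sSup ((φ n) '' nBall T n ε x)))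

/-- `M^s_{N,ε}(Z,Φ)`: infimum over countable covers of `Z` by neutralized Bowen balls
of orders `≥ N`. -/
noncomputable def MN (T : X → X) (φ : ℕ → X → ℝ) (Z : Set X) (s ε : ℝ) (N : ℕ) : ℝ≥0∞ :=
  ⨅ (D : Set (X × ℕ)) (_ : D.Countable) (_ : ∀ p ∈ D, N ≤ p.2)
    (_ : Z ⊆ ⋃ p ∈ D, nBall T p.2 ε p.1),
    ∑' p : D, wSup T φ s ε p.1.2 p.1.1

/-- `M^s_ε(Z,Φ) = lim_{N→∞} M^s_{N,ε}(Z,Φ)` (the limit of a nondecreasing sequence). -/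
noncomputable def Mlim (T : X → X) (φ : ℕ → X → ℝ) (Z : Set X) (s ε : ℝ) : ℝ≥0∞ :=
  ⨆ N, MN T φ Z s ε N

/-- The critical value `M_ε(Z,Φ)`. -/
noncomputable def Mcrit (T : X → X) (φ : ℕ → X → ℝ) (Z : Set X) (ε : ℝ) : ℝ :=
  sInf {s | Mlim T φ Z s ε = 0}

/-- The non-additive neutralized Bowen topological pressure
`P^B̃_Z(T,Φ) = lim_{ε→0} M_ε(Z,Φ) = inf_{ε>0} M_ε(Z,Φ)`. -/
noncomputable def PB (T : X → X) (φ : ℕ → X → ℝ) (Z : Set X) : ℝ :=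
  sInf (Mcrit T φ Z '' Ioi 0)

/-- `M̃^s_{N,ε}(Z,Φ)`: as `M^s_{N,ε}` but with the potential evaluated at an arbitrary
chosen point `z_i` of each covering ball. -/
noncomputable def MtN (T : X → X) (φ : ℕ → X → ℝ) (Z : Set X) (s ε : ℝ) (N : ℕ) : ℝ≥0∞ :=
  ⨅ (D : Set ((X × ℕ) × X)) (_ : D.Countable)
    (_ : ∀ p ∈ D, N ≤ p.1.2 ∧ p.2 ∈ nBall T p.1.2 ε p.1.1)
    (_ : Z ⊆ ⋃ p ∈ D, nBall T p.1.2 ε p.1.1),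
    ∑' p : D, ENNReal.ofReal (Real.exp (-(p.1.1.2 : ℝ) * s + φ p.1.1.2 p.1.2))

noncomputable def Mtlim (T : X → X) (φ : ℕ → X → ℝ) (Z : Set X) (s ε : ℝ) : ℝ≥0∞ :=
  ⨆ N, MtN T φ Z s ε N

noncomputable def MtCrit (T : X → X) (φ : ℕ → X → ℝ) (Z : Set X) (ε : ℝ) : ℝ :=
  sInf {s | Mtlim T φ Z s ε = 0}

/-- `𝓜^s_{N,ε}(Z,Φ)`: as `M^s_{N,ε}` but with the potential evaluated at the centers. -/
noncomputable def McN (T : X → X) (φ : ℕ → X → ℝ) (Z : Set X) (s ε : ℝ) (N : ℕ) : ℝ≥0∞ :=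
  ⨅ (D : Set (X × ℕ)) (_ : D.Countable) (_ : ∀ p ∈ D, N ≤ p.2)
    (_ : Z ⊆ ⋃ p ∈ D, nBall T p.2 ε p.1),
    ∑' p : D, ENNReal.ofReal (Real.exp (-(p.1.2 : ℝ) * s + φ p.1.2 p.1.1))

/-- `W^s_{N,ε}(Z,Φ)`: the weighted version, over countable families of neutralized Bowen
balls with positive coefficients `c_i` such that `Σ c_i χ_{B_i} ≥ χ_Z`. -/
noncomputable def WN (T : X → X) (φ : ℕ → X → ℝ) (Z : Set X) (s ε : ℝ) (N : ℕ) : ℝ≥0∞ :=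
  ⨅ (D : Set ((X × ℕ) × ℝ)) (_ : D.Countable)
    (_ : ∀ p ∈ D, N ≤ p.1.2 ∧ 0 < p.2)
    (_ : ∀ x ∈ Z, (1 : ℝ≥0∞) ≤ ∑' p : D,
        (nBall T p.1.1.2 ε p.1.1.1).indicator (fun _ => ENNReal.ofReal p.1.2) x),
    ∑' p : D, ENNReal.ofReal p.1.2 * wSup T φ s ε p.1.1.2 p.1.1.1

noncomputable def Wlim (T : X → X) (φ : ℕ → X → ℝ) (Z : Set X) (s ε : ℝ) : ℝ≥0∞ :=
  ⨆ N, WN T φ Z s ε N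

noncomputable def Wcrit (T : X → X) (φ : ℕ → X → ℝ) (Z : Set X) (ε : ℝ) : ℝ :=
  sInf {s | Wlim T φ Z s ε = 0}

/-- The non-additive neutralized weighted Bowen topological pressure `P^W̃B_Z(T,Φ)`. -/
noncomputable def PWB (T : X → X) (φ : ℕ → X → ℝ) (Z : Set X) : ℝ :=
  sInf (Wcrit T φ Z '' Ioi 0)

/-- The distortion `φ_n(ε) = sup{|φ_n(x) - φ_n(y)| : x ∈ X, y ∈ B_n(x, e^{-nε})}`. -/
noncomputable def distortion (T : X → X) (φ : ℕ → X → ℝ) (n : ℕ) (ε : ℝ) : ℝ :=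
  sSup {r | ∃ x y, y ∈ nBall T n ε x ∧ r = |φ n x - φ n y|}

/-- The tempered distortion condition `lim_{ε→0} limsup_{n→∞} φ_n(ε)/n = 0`. -/
def Tempered (T : X → X) (φ : ℕ → X → ℝ) : Prop :=
  Tendsto (fun ε => limsup (fun n : ℕ => distortion T φ n ε / n) atTop)
    (𝓝[>] (0 : ℝ)) (𝓝 0)

section Measures

variable [MeasurableSpace X]

/-- `Λ^s_{N,ε}(μ,Φ,δ)`: infimum over countable families of neutralized Bowen balls of
orders `≥ N` whose union has `μ`-measure `> 1 - δ`. -/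
noncomputable def ΛN (T : X → X) (φ : ℕ → X → ℝ) (μ : Measure X) (s ε δ : ℝ) (N : ℕ) :
    ℝ≥0∞ :=
  ⨅ (D : Set (X × ℕ)) (_ : D.Countable) (_ : ∀ p ∈ D, N ≤ p.2)
    (_ : ENNReal.ofReal (1 - δ) < μ (⋃ p ∈ D, nBall T p.2 ε p.1)),
    ∑' p : D, wSup T φ s ε p.1.2 p.1.1

noncomputable def Λlim (T : X → X) (φ : ℕ → X → ℝ) (μ : Measure X) (s ε δ : ℝ) : ℝ≥0∞ :=
  ⨆ N, ΛN T φ μ s ε δ N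

/-- The critical value `Λ_ε(μ,Φ,δ)`. -/
noncomputable def Λcrit (T : X → X) (φ : ℕ → X → ℝ) (μ : Measure X) (ε δ : ℝ) : ℝ :=
  sInf {s | Λlim T φ μ s ε δ = 0}

/-- The neutralized Katok pressure `P^K̃_μ(T,Φ,ε) = lim_{δ→0} Λ_ε(μ,Φ,δ)`. -/
noncomputable def PK (T : X → X) (φ : ℕ → X → ℝ) (μ : Measure X) (ε : ℝ) : ℝ :=
  sSup ((fun δ => Λcrit T φ μ ε δ) '' Ioo (0 : ℝ) 1)

/-- The lower neutralized Brin–Katok local pressure at `x`. -/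
noncomputable def PBKx (T : X → X) (φ : ℕ → X → ℝ) (μ : Measure X) (ε : ℝ) (x : X) : ℝ :=
  liminf (fun n : ℕ => (-Real.log ((μ (nBall T n ε x)).toReal) + φ n x) / n) atTop

/-- The lower neutralized Brin–Katok local pressure `P̲^B̃K_μ(T,Φ,ε)`. -/
noncomputable def PBK (T : X → X) (φ : ℕ → X → ℝ) (μ : Measure X) (ε : ℝ) : ℝ :=
  ∫ x, PBKx T φ μ ε x ∂μ

/-- `sup{P̲^B̃K_μ(T,Φ,ε) : μ ∈ M(X), μ(Z) = 1}`. -/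
noncomputable def supBK (T : X → X) (φ : ℕ → X → ℝ) (Z : Set X) (ε : ℝ) : ℝ :=
  sSup {p | ∃ μ : Measure X, IsProbabilityMeasure μ ∧ μ Z = 1 ∧ p = PBK T φ μ ε}

/-- `lim_{ε→0} sup{P̲^B̃K_μ(T,Φ,ε) : μ(Z)=1}`, realized as the infimum over `ε > 0`. -/
noncomputable def limSupBK (T : X → X) (φ : ℕ → X → ℝ) (Z : Set X) : ℝ :=
  sInf (supBK T φ Z '' Ioi 0)

/-- `sup{P^K̃_μ(T,Φ,ε) : μ ∈ M(X), μ(Z) = 1}`. -/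
noncomputable def supK (T : X → X) (φ : ℕ → X → ℝ) (Z : Set X) (ε : ℝ) : ℝ :=
  sSup {p | ∃ μ : Measure X, IsProbabilityMeasure μ ∧ μ Z = 1 ∧ p = PK T φ μ ε}

/-- `lim_{ε→0} sup{P^K̃_μ(T,Φ,ε) : μ(Z)=1}`, realized as the infimum over `ε > 0`. -/
noncomputable def limSupK (T : X → X) (φ : ℕ → X → ℝ) (Z : Set X) : ℝ :=
  sInf (supK T φ Z '' Ioi 0)

end Measures

namespace Frostman

variable {T : X → X} {φ : ℕ → X → ℝ} {Z : Set X} {s ε : ℝ} {N : ℕ}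

lemma wSup_ne_top {n : ℕ} {x : X} : wSup T φ s ε n x ≠ ∞ := ENNReal.ofReal_ne_top

lemma mem_nBall_self (T : X → X) (n : ℕ) (ε : ℝ) (x : X) : x ∈ nBall T n ε x := by
  intro j _
  simpa using Real.exp_pos (-(n * ε))

lemma isOpen_nBall (hT : Continuous T) (n : ℕ) (ε : ℝ) (x : X) :
    IsOpen (nBall T n ε x) := by
  have h : nBall T n ε x =
      ⋂ j ∈ Finset.range n, (T^[j]) ⁻¹' Metric.ball (T^[j] x) (Real.exp (-(n * ε))) := by
    ext y
    simp only [nBall, bowenBall, Set.mem_setOf_eq, Set.mem_iInter, Finset.mem_range,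
      Set.mem_preimage, Metric.mem_ball]
    constructor
    · intro hy j hj; rw [dist_comm]; exact hy j hj
    · intro hy j hj; rw [dist_comm]; exact hy j hj
  rw [h]
  exact isOpen_biInter_finset fun j _ => Metric.isOpen_ball.preimage (hT.iterate j)

/-- The weighted cover functional applied to a general function. -/
noncomputable def wSet (T : X → X) (φ : ℕ → X → ℝ) (Z : Set X) (s ε : ℝ) (N : ℕ)
    (f : X → ℝ) : ℝ≥0∞ :=
  ⨅ (D : Set ((X × ℕ) × ℝ)) (_ : D.Countable)
    (_ : ∀ p ∈ D, N ≤ p.1.2 ∧ 0 < p.2)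
    (_ : ∀ x ∈ Z, ENNReal.ofReal (f x) ≤ ∑' p : D,
        (nBall T p.1.1.2 ε p.1.1.1).indicator (fun _ => ENNReal.ofReal p.1.2) x),
    ∑' p : D, ENNReal.ofReal p.1.2 * wSup T φ s ε p.1.1.2 p.1.1.1

lemma wSet_one : wSet T φ Z s ε N (fun _ => 1) = WN T φ Z s ε N := by
  simp only [wSet, WN, ENNReal.ofReal_one]

lemma wSet_le {f : X → ℝ} {D : Set ((X × ℕ) × ℝ)} (hc : D.Countable)
    (hD : ∀ p ∈ D, N ≤ p.1.2 ∧ 0 < p.2)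
    (hcov : ∀ x ∈ Z, ENNReal.ofReal (f x) ≤ ∑' p : D,
        (nBall T p.1.1.2 ε p.1.1.1).indicator (fun _ => ENNReal.ofReal p.1.2) x) :
    wSet T φ Z s ε N f ≤ ∑' p : D, ENNReal.ofReal p.1.2 * wSup T φ s ε p.1.1.2 p.1.1.1 :=
  iInf_le_of_le D (iInf_le_of_le hc (iInf_le_of_le hD (iInf_le _ hcov)))

lemma exists_of_wSet_lt {f : X → ℝ} {r : ℝ≥0∞} (h : wSet T φ Z s ε N f < r) :
    ∃ D : Set ((X × ℕ) × ℝ), D.Countable ∧ (∀ p ∈ D, N ≤ p.1.2 ∧ 0 < p.2) ∧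
      (∀ x ∈ Z, ENNReal.ofReal (f x) ≤ ∑' p : D,
        (nBall T p.1.1.2 ε p.1.1.1).indicator (fun _ => ENNReal.ofReal p.1.2) x) ∧
      ∑' p : D, ENNReal.ofReal p.1.2 * wSup T φ s ε p.1.1.2 p.1.1.1 < r := by
  simp only [wSet, iInf_lt_iff] at h
  obtain ⟨D, hc, hD, hcov, hlt⟩ := h
  exact ⟨D, hc, hD, hcov, hlt⟩

lemma wSet_nonpos {f : X → ℝ} (hf : ∀ x ∈ Z, f x ≤ 0) : wSet T φ Z s ε N f = 0 := by
  refine le_antisymm ?_ (zero_le)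
  have h := wSet_le (T := T) (φ := φ) (Z := Z) (s := s) (ε := ε) (N := N) (f := f)
    (D := (∅ : Set ((X × ℕ) × ℝ))) countable_empty (by simp) ?_
  · simpa [tsum_empty] using h
  · intro x hx
    have : ENNReal.ofReal (f x) = 0 := ENNReal.ofReal_eq_zero.2 (hf x hx)
    simp [this]

lemma wSet_le_wSup {f : X → ℝ} {n : ℕ} {x₀ : X} (hn : N ≤ n)
    (hf1 : ∀ x, f x ≤ 1) (hf0 : ∀ x, x ∉ nBall T n ε x₀ → f x ≤ 0) :
    wSet T φ Z s ε N f ≤ wSup T φ s ε n x₀ := by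
  have h := wSet_le (T := T) (φ := φ) (Z := Z) (s := s) (ε := ε) (N := N) (f := f)
    (D := ({((x₀, n), 1)} : Set ((X × ℕ) × ℝ))) (countable_singleton _)
    (by rintro p hp; rw [Set.mem_singleton_iff] at hp; subst hp; exact ⟨hn, one_pos⟩) ?_
  · rw [tsum_singleton (((x₀, n), 1) : (X × ℕ) × ℝ)
      (fun q => ENNReal.ofReal q.2 * wSup T φ s ε q.1.2 q.1.1)] at h
    simpa using h
  · intro x hx
    rw [tsum_singleton (((x₀, n), 1) : (X × ℕ) × ℝ)
      (fun q => (nBall T q.1.2 ε q.1.1).indicator (fun _ => ENNReal.ofReal q.2) x)]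
    by_cases hxB : x ∈ nBall T n ε x₀
    · simp only [Set.indicator_of_mem hxB]
      exact ENNReal.ofReal_le_ofReal (hf1 x)
    · simp only [Set.indicator_of_notMem hxB]
      exact le_of_eq (ENNReal.ofReal_eq_zero.2 (hf0 x hxB))

lemma wSet_lt_top (hT : Continuous T) (hZ : IsCompact Z) {f : X → ℝ} {M : ℝ}
    (hM : 0 < M) (hfM : ∀ x, f x ≤ M) : wSet T φ Z s ε N f < ∞ := by
  obtain ⟨t, ht⟩ := hZ.elim_finite_subcover (fun x : X => nBall T N ε x)
    (fun x => isOpen_nBall hT N ε x) (fun z hz => Set.mem_iUnion.2 ⟨z, mem_nBall_self T N ε z⟩)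
  set D : Set ((X × ℕ) × ℝ) := (fun x : X => ((x, N), M)) '' (t : Set X) with hDdef
  have hDfin : D.Finite := t.finite_toSet.image _
  have hle := wSet_le (T := T) (φ := φ) (Z := Z) (s := s) (ε := ε) (N := N) (f := f)
    (D := D) hDfin.countable ?_ ?_
  · refine lt_of_le_of_lt hle ?_
    haveI := hDfin.fintype
    rw [tsum_fintype]
    refine ENNReal.sum_lt_top.2 fun p _ => ?_
    exact ENNReal.mul_lt_top ENNReal.ofReal_lt_top
      (lt_of_le_of_ne le_top (wSup_ne_top (T := T) (φ := φ)))
  · rintro p ⟨x, hx, rfl⟩; exact ⟨le_refl N, hM⟩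
  · intro z hz
    obtain ⟨i, hit, hzi⟩ := Set.mem_iUnion₂.1 (ht hz)
    have hmem : (((i, N), M) : (X × ℕ) × ℝ) ∈ D := ⟨i, hit, rfl⟩
    calc ENNReal.ofReal (f z) ≤ ENNReal.ofReal M := ENNReal.ofReal_le_ofReal (hfM z)
      _ = (nBall T N ε i).indicator (fun _ => ENNReal.ofReal M) z := by
          rw [Set.indicator_of_mem hzi]
      _ ≤ ∑' p : D, (nBall T p.1.1.2 ε p.1.1.1).indicator
            (fun _ => ENNReal.ofReal p.1.2) z :=
          ENNReal.le_tsum (⟨((i, N), M), hmem⟩ : D)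

lemma wSet_smul_le {a : ℝ} (ha : 0 < a) (f : X → ℝ) :
    wSet T φ Z s ε N (fun x => a * f x) ≤ ENNReal.ofReal a * wSet T φ Z s ε N f := by
  have hane : ENNReal.ofReal a ≠ 0 := by
    simp only [ne_eq, ENNReal.ofReal_eq_zero, not_le]; exact ha
  have hinj : Function.Injective (fun q : (X × ℕ) × ℝ => (q.1, a * q.2)) := by
    intro q q' h
    simp only [Prod.mk.injEq] at h
    exact Prod.ext h.1 (mul_left_cancel₀ ha.ne' h.2)
  have key : ∀ (D : Set ((X × ℕ) × ℝ)), D.Countable →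
      (∀ p ∈ D, N ≤ p.1.2 ∧ 0 < p.2) →
      (∀ x ∈ Z, ENNReal.ofReal (f x) ≤ ∑' p : D,
        (nBall T p.1.1.2 ε p.1.1.1).indicator (fun _ => ENNReal.ofReal p.1.2) x) →
      wSet T φ Z s ε N (fun x => a * f x) ≤
        ENNReal.ofReal a * ∑' p : D, ENNReal.ofReal p.1.2 * wSup T φ s ε p.1.1.2 p.1.1.1 := by
    intro D hc hD hcov
    set sc : (X × ℕ) × ℝ → (X × ℕ) × ℝ := fun q => (q.1, a * q.2) with hsc
    have hle := wSet_le (T := T) (φ := φ) (Z := Z) (s := s) (ε := ε) (N := N)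
      (f := fun x => a * f x) (D := sc '' D) (hc.image _) ?_ ?_
    · refine le_trans hle (le_of_eq ?_)
      rw [tsum_image (fun q : (X × ℕ) × ℝ => ENNReal.ofReal q.2 * wSup T φ s ε q.1.2 q.1.1)
        (hinj.injOn)]
      rw [← ENNReal.tsum_mul_left]
      exact tsum_congr fun q => by
        simp only [hsc, ENNReal.ofReal_mul ha.le, mul_assoc]
    · rintro p ⟨q, hq, rfl⟩
      exact ⟨(hD q hq).1, mul_pos ha (hD q hq).2⟩
    · intro x hx
      calc ENNReal.ofReal (a * f x) = ENNReal.ofReal a * ENNReal.ofReal (f x) :=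
            ENNReal.ofReal_mul ha.le
        _ ≤ ENNReal.ofReal a * ∑' p : D,
              (nBall T p.1.1.2 ε p.1.1.1).indicator (fun _ => ENNReal.ofReal p.1.2) x :=
            mul_le_mul_right (hcov x hx) _
        _ = ∑' p : D, ENNReal.ofReal a *
              (nBall T p.1.1.2 ε p.1.1.1).indicator (fun _ => ENNReal.ofReal p.1.2) x :=
            ENNReal.tsum_mul_left.symm
        _ = ∑' p : D, (nBall T (sc p.1).1.2 ε (sc p.1).1.1).indicator
              (fun _ => ENNReal.ofReal (sc p.1).2) x := by
            refine tsum_congr fun q => ?_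
            by_cases hm : x ∈ nBall T q.1.1.2 ε q.1.1.1
            · simp [hsc, Set.indicator_of_mem hm, ENNReal.ofReal_mul ha.le]
            · simp [hsc, Set.indicator_of_notMem hm]
        _ = ∑' p : ↥(sc '' D), (nBall T p.1.1.2 ε p.1.1.1).indicator
              (fun _ => ENNReal.ofReal p.1.2) x :=
            (tsum_image (fun q : (X × ℕ) × ℝ =>
              (nBall T q.1.2 ε q.1.1).indicator (fun _ => ENNReal.ofReal q.2) x)
              (hinj.injOn)).symm
  have h2 : wSet T φ Z s ε N (fun x => a * f x) * (ENNReal.ofReal a)⁻¹ ≤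
      wSet T φ Z s ε N f := by
    rw [wSet]
    refine le_iInf fun D => le_iInf fun hc => le_iInf fun hD => le_iInf fun hcov => ?_
    calc wSet T φ Z s ε N (fun x => a * f x) * (ENNReal.ofReal a)⁻¹
        ≤ (ENNReal.ofReal a * ∑' p : D,
            ENNReal.ofReal p.1.2 * wSup T φ s ε p.1.1.2 p.1.1.1) * (ENNReal.ofReal a)⁻¹ :=
          mul_le_mul_left (key D hc hD hcov) _
      _ = (∑' p : D, ENNReal.ofReal p.1.2 * wSup T φ s ε p.1.1.2 p.1.1.1) *
            (ENNReal.ofReal a * (ENNReal.ofReal a)⁻¹) := by ring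
      _ = ∑' p : D, ENNReal.ofReal p.1.2 * wSup T φ s ε p.1.1.2 p.1.1.1 := by
          rw [ENNReal.mul_inv_cancel hane ENNReal.ofReal_ne_top, mul_one]
  calc wSet T φ Z s ε N (fun x => a * f x)
      = wSet T φ Z s ε N (fun x => a * f x) * ((ENNReal.ofReal a)⁻¹ * ENNReal.ofReal a) := by
        rw [ENNReal.inv_mul_cancel hane ENNReal.ofReal_ne_top, mul_one]
    _ = (wSet T φ Z s ε N (fun x => a * f x) * (ENNReal.ofReal a)⁻¹) * ENNReal.ofReal a := by
        ring
    _ ≤ wSet T φ Z s ε N f * ENNReal.ofReal a := mul_le_mul_left h2 _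
    _ = ENNReal.ofReal a * wSet T φ Z s ε N f := mul_comm _ _

lemma exists_scale (D1 D2 : Set ((X × ℕ) × ℝ)) (h1 : D1.Countable) (h2 : D2.Countable)
    (h2pos : ∀ p ∈ D2, 0 < p.2) {δ : ℝ} (hδ : 0 < δ) :
    ∃ θ : ℝ, 1 < θ ∧ θ < 1 + δ ∧ ∀ p ∈ D2, (p.1, θ * p.2) ∉ D1 := by
  set Bad : Set ℝ :=
    (fun pq : ((X × ℕ) × ℝ) × ((X × ℕ) × ℝ) => pq.2.2 / pq.1.2) '' (D2 ×ˢ D1) with hBadDef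
  have hBad : Bad.Countable := (h2.prod h1).image _
  have hne : (Set.Ioo (1 : ℝ) (1 + δ) \ Bad).Nonempty := by
    by_contra h
    rw [Set.not_nonempty_iff_eq_empty, Set.diff_eq_empty] at h
    have h0 : volume (Set.Ioo (1 : ℝ) (1 + δ)) = 0 :=
      measure_mono_null h (hBad.measure_zero volume)
    rw [Real.volume_Ioo] at h0
    rw [ENNReal.ofReal_eq_zero] at h0
    linarith
  obtain ⟨θ, hθI, hθB⟩ := hne
  refine ⟨θ, hθI.1, hθI.2, fun p hp hmem => hθB ?_⟩
  refine ⟨(p, (p.1, θ * p.2)), ⟨hp, hmem⟩, ?_⟩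
  exact mul_div_cancel_right₀ θ (h2pos p hp).ne'

lemma wSet_add_le {f g : X → ℝ} (hg : wSet T φ Z s ε N g ≠ ∞) {δ : ℝ} (hδ : 0 < δ) :
    wSet T φ Z s ε N (fun x => f x + g x) ≤
      wSet T φ Z s ε N f + wSet T φ Z s ε N g + 3 * ENNReal.ofReal δ := by
  by_cases hf : wSet T φ Z s ε N f = ∞
  · rw [hf]; simp [top_add]
  have hδ' : (ENNReal.ofReal δ) ≠ 0 := by
    simp only [ne_eq, ENNReal.ofReal_eq_zero, not_le]; exact hδ
  obtain ⟨D1, hc1, hD1, hcov1, hlt1⟩ := exists_of_wSet_lt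
    (ENNReal.lt_add_right hf hδ' : wSet T φ Z s ε N f < wSet T φ Z s ε N f + ENNReal.ofReal δ)
  obtain ⟨D2, hc2, hD2, hcov2, hlt2⟩ := exists_of_wSet_lt
    (ENNReal.lt_add_right hg hδ' : wSet T φ Z s ε N g < wSet T φ Z s ε N g + ENNReal.ofReal δ)
  set S1 := ∑' p : D1, ENNReal.ofReal p.1.2 * wSup T φ s ε p.1.1.2 p.1.1.1 with hS1def
  set S2 := ∑' p : D2, ENNReal.ofReal p.1.2 * wSup T φ s ε p.1.1.2 p.1.1.1 with hS2def
  have hS2top : S2 ≠ ∞ := ne_top_of_lt hlt2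
  have hδ'' : 0 < δ / (S2.toReal + 1) := div_pos hδ (by positivity)
  obtain ⟨θ, hθ1, hθ2, hθD⟩ := exists_scale D1 D2 hc1 hc2 (fun p hp => (hD2 p hp).2) hδ''
  have hθ0 : (0 : ℝ) < θ := lt_trans one_pos hθ1
  have hinj : Function.Injective (fun q : (X × ℕ) × ℝ => (q.1, θ * q.2)) := by
    intro q q' h
    simp only [Prod.mk.injEq] at h
    exact Prod.ext h.1 (mul_left_cancel₀ hθ0.ne' h.2)
  set sc : (X × ℕ) × ℝ → (X × ℕ) × ℝ := fun q => (q.1, θ * q.2) with hsc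
  set E2 := sc '' D2 with hE2
  have hdisj : Disjoint D1 E2 := by
    rw [Set.disjoint_right]
    rintro p ⟨q, hq, rfl⟩
    exact hθD q hq
  have hle := wSet_le (T := T) (φ := φ) (Z := Z) (s := s) (ε := ε) (N := N)
    (f := fun x => f x + g x) (D := D1 ∪ E2) (hc1.union (hc2.image _)) ?_ ?_
  · have hsum : ∑' p : ↥(D1 ∪ E2), ENNReal.ofReal p.1.2 * wSup T φ s ε p.1.1.2 p.1.1.1
        = S1 + ENNReal.ofReal θ * S2 := by
      rw [ENNReal.summable.tsum_union_disjoint (f := fun q : (X × ℕ) × ℝ =>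
        ENNReal.ofReal q.2 * wSup T φ s ε q.1.2 q.1.1) hdisj ENNReal.summable]
      congr 1
      rw [hE2, tsum_image (fun q : (X × ℕ) × ℝ =>
        ENNReal.ofReal q.2 * wSup T φ s ε q.1.2 q.1.1) (hinj.injOn)]
      rw [← ENNReal.tsum_mul_left]
      exact tsum_congr fun q => by
        simp only [hsc, ENNReal.ofReal_mul hθ0.le, mul_assoc]
    rw [hsum] at hle
    have hbound : ENNReal.ofReal θ * S2 ≤ S2 + ENNReal.ofReal δ := by
      have hθsplit : ENNReal.ofReal θ = 1 + ENNReal.ofReal (θ - 1) := by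
        rw [← ENNReal.ofReal_one, ← ENNReal.ofReal_add zero_le_one (by linarith)]
        norm_num
      rw [hθsplit, add_mul, one_mul]
      refine add_le_add_right ?_ S2
      calc ENNReal.ofReal (θ - 1) * S2
          = ENNReal.ofReal (θ - 1) * ENNReal.ofReal S2.toReal := by
            rw [ENNReal.ofReal_toReal hS2top]
        _ = ENNReal.ofReal ((θ - 1) * S2.toReal) := by
            rw [ENNReal.ofReal_mul (by linarith)]
        _ ≤ ENNReal.ofReal δ := by
            refine ENNReal.ofReal_le_ofReal ?_
            have h1 : (θ - 1) * S2.toReal ≤ δ / (S2.toReal + 1) * S2.toReal := by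
              have := ENNReal.toReal_nonneg (a := S2)
              nlinarith
            refine le_trans h1 ?_
            rw [div_mul_eq_mul_div, div_le_iff₀ (by positivity)]
            have := ENNReal.toReal_nonneg (a := S2)
            nlinarith
    calc wSet T φ Z s ε N (fun x => f x + g x) ≤ S1 + ENNReal.ofReal θ * S2 := hle
      _ ≤ S1 + (S2 + ENNReal.ofReal δ) := add_le_add_right hbound S1
      _ ≤ (wSet T φ Z s ε N f + ENNReal.ofReal δ) +
            ((wSet T φ Z s ε N g + ENNReal.ofReal δ) + ENNReal.ofReal δ) :=
          add_le_add hlt1.le (add_le_add_left hlt2.le _)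
      _ = wSet T φ Z s ε N f + wSet T φ Z s ε N g + 3 * ENNReal.ofReal δ := by ring
  · rintro p (hp | ⟨q, hq, rfl⟩)
    · exact hD1 p hp
    · exact ⟨(hD2 q hq).1, mul_pos hθ0 (hD2 q hq).2⟩
  · intro x hx
    calc ENNReal.ofReal (f x + g x) ≤ ENNReal.ofReal (f x) + ENNReal.ofReal (g x) :=
          ENNReal.ofReal_add_le
      _ ≤ (∑' p : D1, (nBall T p.1.1.2 ε p.1.1.1).indicator
              (fun _ => ENNReal.ofReal p.1.2) x) +
            ∑' p : D2, (nBall T p.1.1.2 ε p.1.1.1).indicator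
              (fun _ => ENNReal.ofReal p.1.2) x :=
          add_le_add (hcov1 x hx) (hcov2 x hx)
      _ ≤ (∑' p : D1, (nBall T p.1.1.2 ε p.1.1.1).indicator
              (fun _ => ENNReal.ofReal p.1.2) x) +
            ∑' p : D2, (nBall T (sc p.1).1.2 ε (sc p.1).1.1).indicator
              (fun _ => ENNReal.ofReal (sc p.1).2) x := by
          refine add_le_add_right (ENNReal.tsum_le_tsum fun q => ?_) _
          by_cases hm : x ∈ nBall T q.1.1.2 ε q.1.1.1
          · simp only [hsc, Set.indicator_of_mem hm]
            exact ENNReal.ofReal_le_ofReal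
              (le_mul_of_one_le_left (hD2 q q.2).2.le hθ1.le)
          · simp [hsc, Set.indicator_of_notMem hm]
      _ = (∑' p : D1, (nBall T p.1.1.2 ε p.1.1.1).indicator
              (fun _ => ENNReal.ofReal p.1.2) x) +
            ∑' p : ↥E2, (nBall T p.1.1.2 ε p.1.1.1).indicator
              (fun _ => ENNReal.ofReal p.1.2) x := by
          congr 1
          rw [hE2, tsum_image (fun q : (X × ℕ) × ℝ =>
            (nBall T q.1.2 ε q.1.1).indicator (fun _ => ENNReal.ofReal q.2) x) (hinj.injOn)]
      _ = ∑' p : ↥(D1 ∪ E2), (nBall T p.1.1.2 ε p.1.1.1).indicator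
              (fun _ => ENNReal.ofReal p.1.2) x :=
          (ENNReal.summable.tsum_union_disjoint (f := fun q : (X × ℕ) × ℝ =>
            (nBall T q.1.2 ε q.1.1).indicator (fun _ => ENNReal.ofReal q.2) x)
            hdisj ENNReal.summable).symm

end Frostman

/-- Frostman's lemma for the neutralized weighted pressure. -/
theorem stmt10 {X : Type*} [MetricSpace X] [CompactSpace X] [MeasurableSpace X]
    [BorelSpace X] (T : X → X) (hT : Continuous T)
    (φ : ℕ → X → ℝ) (hφ : ∀ n, Continuous (φ n)) (Z : Set X) (hZne : Z.Nonempty)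
    (hZ : IsCompact Z) (s ε : ℝ) (hε : 0 < ε) (N : ℕ)
    (c : ℝ≥0∞) (hc : c = WN T φ Z s ε N) (hcpos : 0 < c) :
    ∃ μ : Measure X, IsProbabilityMeasure μ ∧ μ Z = 1 ∧
      ∀ (x : X) (n : ℕ), N ≤ n →
        μ (nBall T n ε x) ≤
          c⁻¹ * ENNReal.ofReal
            (Real.exp (-(n : ℝ) * s + sSup ((φ n) '' nBall T n ε x))) := by
  classical
  haveI hXne : Nonempty X := ⟨hZne.some⟩
  have hc0 : c ≠ 0 := hcpos.ne'
  -- the sublinear functional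
  set P : C(X, ℝ) → ℝ := fun f => (Frostman.wSet T φ Z s ε N ⇑f).toReal with hPdef
  have hfin : ∀ f : C(X, ℝ), Frostman.wSet T φ Z s ε N ⇑f ≠ ∞ := by
    intro f
    refine (Frostman.wSet_lt_top hT hZ (M := ‖f‖ + 1) (by positivity) ?_).ne
    intro x
    have h1 : f x ≤ |f x| := le_abs_self _
    have h2 : ‖f x‖ ≤ ‖f‖ := f.norm_coe_le_norm x
    rw [Real.norm_eq_abs] at h2
    linarith
  have hcne_top : c ≠ ∞ := by
    rw [hc, ← Frostman.wSet_one]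
    exact (Frostman.wSet_lt_top hT hZ one_pos (fun _ => le_refl (1 : ℝ))).ne
  have hone : ⇑(1 : C(X, ℝ)) = fun _ : X => (1 : ℝ) := rfl
  have hP1 : P 1 = c.toReal := by
    rw [hPdef]
    simp only [hone]
    rw [Frostman.wSet_one, ← hc]
  have hN_hom : ∀ a : ℝ, 0 < a → ∀ f : C(X, ℝ), P (a • f) = a * P f := by
    intro a ha f
    have hcoe : ⇑(a • f) = fun x => a * f x := by ext x; simp
    have h1 := Frostman.wSet_smul_le (T := T) (φ := φ) (Z := Z) (s := s) (ε := ε) (N := N)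
      ha ⇑f
    have h2 := Frostman.wSet_smul_le (T := T) (φ := φ) (Z := Z) (s := s) (ε := ε) (N := N)
      (inv_pos.2 ha) (fun x => a * f x)
    have h2' : (fun x => a⁻¹ * (a * f x)) = ⇑f := by
      ext x; rw [inv_mul_cancel_left₀ ha.ne']
    rw [h2'] at h2
    have hao : ENNReal.ofReal a * ENNReal.ofReal a⁻¹ = 1 := by
      rw [← ENNReal.ofReal_mul ha.le, mul_inv_cancel₀ ha.ne', ENNReal.ofReal_one]
    have heq : Frostman.wSet T φ Z s ε N (fun x => a * f x) =
        ENNReal.ofReal a * Frostman.wSet T φ Z s ε N ⇑f := by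
      refine le_antisymm h1 ?_
      calc ENNReal.ofReal a * Frostman.wSet T φ Z s ε N ⇑f
          ≤ ENNReal.ofReal a * (ENNReal.ofReal a⁻¹ *
              Frostman.wSet T φ Z s ε N (fun x => a * f x)) := mul_le_mul_right h2 _
        _ = (ENNReal.ofReal a * ENNReal.ofReal a⁻¹) *
              Frostman.wSet T φ Z s ε N (fun x => a * f x) := by ring
        _ = Frostman.wSet T φ Z s ε N (fun x => a * f x) := by rw [hao, one_mul]
    rw [hPdef]
    simp only [hcoe]
    rw [heq, ENNReal.toReal_mul, ENNReal.toReal_ofReal ha.le]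
  have hN_add : ∀ f g : C(X, ℝ), P (f + g) ≤ P f + P g := by
    intro f g
    have hcoe : ⇑(f + g) = fun x => f x + g x := rfl
    have key : ∀ δ : ℝ, 0 < δ → P (f + g) ≤ P f + P g + 3 * δ := by
      intro δ hδ
      have h := Frostman.wSet_add_le (T := T) (φ := φ) (Z := Z) (s := s) (ε := ε) (N := N)
        (f := ⇑f) (g := ⇑g) (hfin g) hδ
      have hrtop : Frostman.wSet T φ Z s ε N ⇑f + Frostman.wSet T φ Z s ε N ⇑g +
          3 * ENNReal.ofReal δ ≠ ∞ := by
        refine ENNReal.add_ne_top.2 ⟨ENNReal.add_ne_top.2 ⟨hfin f, hfin g⟩, ?_⟩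
        exact ENNReal.mul_ne_top (by simp) ENNReal.ofReal_ne_top
      have h2 := ENNReal.toReal_mono hrtop h
      rw [hPdef]
      simp only [hcoe]
      calc (Frostman.wSet T φ Z s ε N fun x => f x + g x).toReal
          ≤ (Frostman.wSet T φ Z s ε N ⇑f + Frostman.wSet T φ Z s ε N ⇑g +
              3 * ENNReal.ofReal δ).toReal := h2
        _ = (Frostman.wSet T φ Z s ε N ⇑f).toReal + (Frostman.wSet T φ Z s ε N ⇑g).toReal
              + 3 * δ := by
            rw [ENNReal.toReal_add (ENNReal.add_ne_top.2 ⟨hfin f, hfin g⟩)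
              (ENNReal.mul_ne_top (by simp) ENNReal.ofReal_ne_top),
              ENNReal.toReal_add (hfin f) (hfin g), ENNReal.toReal_mul,
              ENNReal.toReal_ofReal hδ.le]
            norm_num
    by_contra hcon
    push_neg at hcon
    have hδ : 0 < (P (f + g) - (P f + P g)) / 4 := by linarith
    have := key _ hδ
    linarith
  have h1ne : (1 : C(X, ℝ)) ≠ 0 := by
    intro h
    have := congrArg (fun u : C(X, ℝ) => u hZne.some) h
    simpa using this
  have hf0 : ∀ z : (LinearPMap.mkSpanSingleton (K := ℝ) (σ := RingHom.id ℝ) (1 : C(X, ℝ)) c.toReal h1ne).domain,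
      (LinearPMap.mkSpanSingleton (K := ℝ) (σ := RingHom.id ℝ) (1 : C(X, ℝ)) c.toReal h1ne) z ≤ P z := by
    rintro ⟨x, hx⟩
    have hx' : x ∈ Submodule.span ℝ ({(1 : C(X, ℝ))} : Set C(X, ℝ)) := hx
    rw [Submodule.mem_span_singleton] at hx'
    obtain ⟨a, ha⟩ := hx'
    have happ : (LinearPMap.mkSpanSingleton (K := ℝ) (σ := RingHom.id ℝ) (1 : C(X, ℝ)) c.toReal h1ne) ⟨x, hx⟩
        = a * c.toReal := by
      have : (⟨x, hx⟩ : (LinearPMap.mkSpanSingleton (K := ℝ) (σ := RingHom.id ℝ) (1 : C(X, ℝ)) c.toReal h1ne).domain)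
          = ⟨a • (1 : C(X, ℝ)), ha ▸ hx⟩ := by
        apply Subtype.ext; exact ha.symm
      rw [this, LinearPMap.mkSpanSingleton'_apply]
      exact smul_eq_mul a c.toReal
    rw [happ]
    rcases lt_trichotomy a 0 with hneg | rfl0 | hpos
    · have hP0 : 0 ≤ P x := ENNReal.toReal_nonneg
      have hc0' : 0 ≤ c.toReal := ENNReal.toReal_nonneg
      nlinarith
    · subst rfl0
      simp only [zero_mul]
      exact ENNReal.toReal_nonneg
    · have : P x = a * c.toReal := by
        rw [← ha, hN_hom a hpos 1, hP1]
      rw [this]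
  obtain ⟨F, hFeq, hFle⟩ := exists_extension_of_le_sublinear
    (LinearPMap.mkSpanSingleton (K := ℝ) (σ := RingHom.id ℝ) (1 : C(X, ℝ)) c.toReal h1ne) P hN_hom hN_add hf0
  have hF1 : F 1 = c.toReal := by
    have h := hFeq ⟨(1 : C(X, ℝ)), Submodule.mem_span_singleton_self _⟩
    rw [LinearPMap.mkSpanSingleton_apply] at h
    exact h
  have hFpos : ∀ f : C(X, ℝ), (∀ x, 0 ≤ f x) → 0 ≤ F f := by
    intro f hfnn
    have h1 : F (-f) ≤ P (-f) := hFle (-f)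
    have h2 : P (-f) = 0 := by
      rw [hPdef]
      have : ⇑(-f) = fun x => -(f x) := rfl
      simp only [this]
      rw [Frostman.wSet_nonpos (fun x _ => neg_nonpos.2 (hfnn x))]
      simp
    have h3 : F (-f) = -F f := map_neg F f
    linarith
  have hFmono : ∀ f g : C(X, ℝ), (∀ x, f x ≤ g x) → F f ≤ F g := by
    intro f g h
    have h1 : 0 ≤ F (g - f) := hFpos _ (fun x => by
      simp only [ContinuousMap.sub_apply]; linarith [h x])
    have h2 : F (g - f) = F g - F f := map_sub F g f
    linarith
  -- the content
  set A : Set X → Set C(X, ℝ) :=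
    fun K => {f | (∀ x, 0 ≤ f x) ∧ ∀ x ∈ K, 1 ≤ f x} with hA
  set mR : Set X → ℝ := fun K => sInf (F '' A K) with hmR
  have h1A : ∀ K, (1 : C(X, ℝ)) ∈ A K := fun K =>
    ⟨fun _ => zero_le_one, fun _ _ => le_refl 1⟩
  have hne : ∀ K, (F '' A K).Nonempty := fun K => ⟨F 1, ⟨1, h1A K, rfl⟩⟩
  have hbdd : ∀ K, BddBelow (F '' A K) := fun K =>
    ⟨0, by rintro b ⟨f, hf, rfl⟩; exact hFpos f hf.1⟩
  have hmR_nonneg : ∀ K, 0 ≤ mR K := fun K =>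
    le_csInf (hne K) (by rintro b ⟨f, hf, rfl⟩; exact hFpos f hf.1)
  have hmR_le : ∀ (K : Set X) (f : C(X, ℝ)), f ∈ A K → mR K ≤ F f :=
    fun K f hf => csInf_le (hbdd K) ⟨f, hf, rfl⟩
  have hmR_mono : ∀ K1 K2 : Set X, K1 ⊆ K2 → mR K1 ≤ mR K2 := by
    intro K1 K2 h
    refine csInf_le_csInf (hbdd K1) (hne K2) (Set.image_mono (f := F) ?_)
    rintro f ⟨hf1, hf2⟩
    exact ⟨hf1, fun x hx => hf2 x (h hx)⟩
  have hmR_subadd : ∀ K1 K2 : Set X, mR (K1 ∪ K2) ≤ mR K1 + mR K2 := by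
    intro K1 K2
    have key : ∀ y ∈ F '' A K1, ∀ z ∈ F '' A K2, mR (K1 ∪ K2) ≤ y + z := by
      rintro _ ⟨f1, hf1, rfl⟩ _ ⟨f2, hf2, rfl⟩
      rw [← map_add]
      refine hmR_le _ _ ⟨fun x => by
        simp only [ContinuousMap.add_apply]
        exact add_nonneg (hf1.1 x) (hf2.1 x), ?_⟩
      rintro x (hx | hx)
      · have ha := hf1.2 x hx; have hb := hf2.1 x
        simp only [ContinuousMap.add_apply]; linarith
      · have ha := hf2.2 x hx; have hb := hf1.1 x
        simp only [ContinuousMap.add_apply]; linarith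
    have step : ∀ z ∈ F '' A K2, mR (K1 ∪ K2) - z ≤ mR K1 := by
      intro z hz
      refine le_csInf (hne K1) fun y hy => ?_
      have := key y hy z hz; linarith
    have step2 : mR (K1 ∪ K2) - mR K1 ≤ mR K2 := by
      refine le_csInf (hne K2) fun z hz => ?_
      have := step z hz; linarith
    linarith
  have hmR_disj : ∀ K1 K2 : Set X, IsClosed K1 → IsClosed K2 → Disjoint K1 K2 →
      mR K1 + mR K2 ≤ mR (K1 ∪ K2) := by
    intro K1 K2 hcl1 hcl2 hd
    refine le_csInf (hne (K1 ∪ K2)) ?_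
    rintro _ ⟨f, hf, rfl⟩
    obtain ⟨g, hg0, hg1, hg01⟩ := exists_continuous_zero_one_of_isClosed hcl2 hcl1 hd.symm
    have hfg : f * g ∈ A K1 := by
      refine ⟨fun x => by
        simp only [ContinuousMap.mul_apply]
        exact mul_nonneg (hf.1 x) (hg01 x).1, ?_⟩
      intro x hx
      have h1 := hg1 hx
      simp only [Pi.one_apply] at h1
      simp only [ContinuousMap.mul_apply, h1, mul_one]
      exact hf.2 x (Or.inl hx)
    have hfg2 : f * (1 - g) ∈ A K2 := by
      refine ⟨fun x => by
        simp only [ContinuousMap.mul_apply, ContinuousMap.sub_apply, ContinuousMap.one_apply]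
        have := (hg01 x).2
        exact mul_nonneg (hf.1 x) (by linarith), ?_⟩
      intro x hx
      have h0 := hg0 hx
      simp only [Pi.zero_apply] at h0
      simp only [ContinuousMap.mul_apply, ContinuousMap.sub_apply, ContinuousMap.one_apply, h0]
      simpa using hf.2 x (Or.inr hx)
    have hsum : f * g + f * (1 - g) = f := by ring
    calc mR K1 + mR K2 ≤ F (f * g) + F (f * (1 - g)) :=
          add_le_add (hmR_le _ _ hfg) (hmR_le _ _ hfg2)
      _ = F (f * g + f * (1 - g)) := (map_add F _ _).symm
      _ = F f := by rw [hsum]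
  set Cμ : MeasureTheory.Content X :=
    { toFun := fun K => (mR ↑K).toNNReal
      mono' := fun K1 K2 h => Real.toNNReal_le_toNNReal (hmR_mono _ _ h)
      sup_disjoint' := by
        intro K1 K2 hd hcl1 hcl2
        have h1 : mR (↑(K1 ⊔ K2) : Set X) = mR ↑K1 + mR ↑K2 := by
          have hcs : (↑(K1 ⊔ K2) : Set X) = ↑K1 ∪ ↑K2 := rfl
          rw [hcs]
          exact le_antisymm (hmR_subadd _ _) (hmR_disj _ _ hcl1 hcl2 hd)
        show (mR ↑(K1 ⊔ K2)).toNNReal = (mR ↑K1).toNNReal + (mR ↑K2).toNNReal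
        rw [h1, Real.toNNReal_add (hmR_nonneg _) (hmR_nonneg _)]
      sup_le' := by
        intro K1 K2
        have hcs : (↑(K1 ⊔ K2) : Set X) = ↑K1 ∪ ↑K2 := rfl
        calc (mR ↑(K1 ⊔ K2)).toNNReal ≤ (mR ↑K1 + mR ↑K2).toNNReal := by
              refine Real.toNNReal_le_toNNReal ?_
              rw [hcs]; exact hmR_subadd _ _
          _ ≤ (mR ↑K1).toNNReal + (mR ↑K2).toNNReal := Real.toNNReal_add_le } with hCμ
  have hcoe : ∀ K : TopologicalSpace.Compacts X,
      (Cμ K : ℝ≥0∞) = ENNReal.ofReal (mR ↑K) := fun K => rfl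
  have hμ₀open : ∀ (U : Set X) (hU : IsOpen U) (b : ℝ≥0∞),
      (∀ K : TopologicalSpace.Compacts X, (K : Set X) ⊆ U → ENNReal.ofReal (mR ↑K) ≤ b) →
      Cμ.measure U ≤ b := by
    intro U hU b hb
    rw [Cμ.measure_apply hU.measurableSet, Cμ.outerMeasure_of_isOpen U hU]
    exact iSup₂_le fun K hK => le_trans (le_of_eq (hcoe K)) (hb K hK)
  have hKU : ∀ (K : TopologicalSpace.Compacts X) (U : Set X), IsOpen U → (K : Set X) ⊆ U →
      ∃ g : C(X, ℝ), g ∈ A ↑K ∧ (∀ x, g x ≤ 1) ∧ (∀ x, x ∉ U → g x = 0) := by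
    intro K U hU hsub
    obtain ⟨g, hg0, hg1, hg01⟩ := exists_continuous_zero_one_of_isClosed
      hU.isClosed_compl K.isCompact.isClosed
      (Set.disjoint_left.2 fun x hxU hxK => hxU (hsub hxK))
    refine ⟨g, ⟨fun x => (hg01 x).1, fun x hx => ?_⟩, fun x => (hg01 x).2, fun x hx => ?_⟩
    · have := hg1 hx; simp only [Pi.one_apply] at this; linarith
    · have := hg0 hx; simpa using this
  have hball : ∀ (x₀ : X) (n : ℕ), N ≤ n →
      Cμ.measure (nBall T n ε x₀) ≤ wSup T φ s ε n x₀ := by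
    intro x₀ n hn
    refine hμ₀open _ (Frostman.isOpen_nBall hT n ε x₀) _ ?_
    intro K hK
    obtain ⟨g, hgA, hg1, hg0⟩ := hKU K _ (Frostman.isOpen_nBall hT n ε x₀) hK
    calc ENNReal.ofReal (mR ↑K) ≤ ENNReal.ofReal (F g) :=
          ENNReal.ofReal_le_ofReal (hmR_le _ _ hgA)
      _ ≤ ENNReal.ofReal (P g) := ENNReal.ofReal_le_ofReal (hFle g)
      _ = Frostman.wSet T φ Z s ε N ⇑g := ENNReal.ofReal_toReal (hfin g)
      _ ≤ wSup T φ s ε n x₀ :=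
          Frostman.wSet_le_wSup hn hg1 (fun x hx => le_of_eq (hg0 x hx))
  have htot : Cμ.measure Set.univ = c := by
    apply le_antisymm
    · refine hμ₀open _ isOpen_univ c ?_
      intro K _
      calc ENNReal.ofReal (mR ↑K) ≤ ENNReal.ofReal (F 1) :=
            ENNReal.ofReal_le_ofReal (hmR_le _ _ (h1A _))
        _ = ENNReal.ofReal c.toReal := by rw [hF1]
        _ = c := ENNReal.ofReal_toReal hcne_top
    · rw [Cμ.measure_apply MeasurableSet.univ, Cμ.outerMeasure_of_isOpen _ isOpen_univ]
      have hmuniv : mR Set.univ = c.toReal := by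
        refine le_antisymm ?_ ?_
        · have := hmR_le Set.univ 1 (h1A _); rw [hF1] at this; exact this
        · refine le_csInf (hne _) ?_
          rintro _ ⟨f, hf, rfl⟩
          rw [← hF1]
          exact hFmono 1 f (fun x => hf.2 x trivial)
      have hKle := Cμ.le_innerContent ⟨Set.univ, isCompact_univ⟩
        ⟨Set.univ, isOpen_univ⟩ (by exact subset_rfl)
      refine le_trans (le_of_eq ?_) hKle
      rw [hcoe ⟨Set.univ, isCompact_univ⟩]
      simp only [TopologicalSpace.Compacts.coe_mk]
      rw [hmuniv, ENNReal.ofReal_toReal hcne_top]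
  have hZc : Cμ.measure Zᶜ = 0 := by
    refine le_antisymm (hμ₀open _ hZ.isClosed.isOpen_compl 0 ?_) (zero_le)
    intro K hK
    obtain ⟨g, hg0, hg1, hg01⟩ := exists_continuous_zero_one_of_isClosed
      hZ.isClosed K.isCompact.isClosed
      (Set.disjoint_left.2 fun x hxZ hxK => (hK hxK) hxZ)
    have hgA : g ∈ A ↑K := by
      refine ⟨fun x => (hg01 x).1, fun x hx => ?_⟩
      have := hg1 hx; simp only [Pi.one_apply] at this; linarith
    have hPg : P g = 0 := by
      show (Frostman.wSet T φ Z s ε N ⇑g).toReal = 0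
      rw [Frostman.wSet_nonpos (fun x hx => by
        have := hg0 hx; simp only [Pi.zero_apply] at this; exact le_of_eq this)]
      simp
    calc ENNReal.ofReal (mR ↑K) ≤ ENNReal.ofReal (F g) :=
          ENNReal.ofReal_le_ofReal (hmR_le _ _ hgA)
      _ ≤ ENNReal.ofReal (P g) := ENNReal.ofReal_le_ofReal (hFle g)
      _ = 0 := by rw [hPg]; simp
  refine ⟨c⁻¹ • Cμ.measure, ?_, ?_, ?_⟩
  · constructor
    rw [Measure.smul_apply, smul_eq_mul, htot]
    exact ENNReal.inv_mul_cancel hc0 hcne_top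
  · have hZmeas : MeasurableSet Z := hZ.isClosed.measurableSet
    have hsum : Cμ.measure Z + Cμ.measure Zᶜ = Cμ.measure Set.univ :=
      measure_add_measure_compl hZmeas
    rw [hZc, add_zero, htot] at hsum
    rw [Measure.smul_apply, smul_eq_mul, hsum]
    exact ENNReal.inv_mul_cancel hc0 hcne_top
  · intro x n hn
    rw [Measure.smul_apply, smul_eq_mul]
    have h := hball x n hn
    calc c⁻¹ * Cμ.measure (nBall T n ε x) ≤ c⁻¹ * wSup T φ s ε n x :=
          mul_le_mul_right h _
      _ = c⁻¹ * ENNReal.ofReal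
            (Real.exp (-(n : ℝ) * s + sSup ((φ n) '' nBall T n ε x))) := rfl
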